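/- Let n ≥ 3 and let S = {1, 2, …, k} for some k with 1 ≤ k ≤ n-2. Then the maximum of d_H(σ,ρ) over all pairs of distinct permutations σ, ρ ∈ D(S;n) equals n-1. -/

import Mathlib

/-- `σ` is a permutation of `[n] = {1,…,n}`, written in one-line notation:
`σ j` is the `j`-th entry, for `1 ≤ j ≤ n`. -/
def IsPermOn (n : ℕ) (σ : ℕ → ℕ) : Prop :=
  Set.BijOn σ (Set.Icc 1 n) (Set.Icc 1 n)

/-- The descent set `D(σ) = {i ∈ [n-1] | σ_i > σ_{i+1}}`. -/
def DescentSet (n : ℕ) (σ : ℕ → ℕ) : Finset ℕ :=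
  (Finset.Icc 1 (n - 1)).filter fun i => σ (i + 1) < σ i

/-- `D(S;n)`, the set of permutations of `[n]` with descent set `S`. -/
def DSn (n : ℕ) (S : Finset ℕ) : Set (ℕ → ℕ) :=
  {σ | IsPermOn n σ ∧ DescentSet n σ = S}

/-- The Hamming distance `d_H(σ,ρ) = |{i ∈ [n] : σ_i ≠ ρ_i}|`. -/
def dHamming (n : ℕ) (σ ρ : ℕ → ℕ) : ℕ :=
  ((Finset.Icc 1 n).filter fun i => σ i ≠ ρ i).card

/-- The `ℓ∞` distance `d_ℓ(σ,ρ) = max_{1 ≤ i ≤ n} |σ_i − ρ_i|`. -/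
def dLinf (n : ℕ) (σ ρ : ℕ → ℕ) : ℕ :=
  (Finset.Icc 1 n).sup fun i => ((σ i : ℤ) - (ρ i : ℤ)).natAbs

/-- `σ` and `ρ` are distinct as permutations of `[n]`
(they differ at some index of `[n]`). -/
def DistinctOn (n : ℕ) (σ ρ : ℕ → ℕ) : Prop :=
  ∃ i ∈ Set.Icc 1 n, σ i ≠ ρ i

/-- First explicit valley permutation: `(k+1, k, …, 2, 1, k+2, k+3, …, n)`. -/
def sigA (k : ℕ) (i : ℕ) : ℕ := if i ≤ k + 1 then k + 2 - i else i

/-- Second explicit valley permutation: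
`(n, k+1, k, …, 3, 1, 2, k+2, k+3, …, n-1)`. -/
def rhoA (n k : ℕ) (i : ℕ) : ℕ :=
  if i = 1 then n
  else if i ≤ k then k + 3 - i
  else if i = k + 1 then 1
  else if i = k + 2 then 2
  else i - 1

/-- Inverse of `rhoA`. -/
def rhoInv (n k : ℕ) (v : ℕ) : ℕ :=
  if v = n then 1
  else if v ≤ 2 then v + k
  else if v ≤ k + 1 then k + 3 - v
  else v + 1

lemma sigA_perm (n k : ℕ) (hn : 3 ≤ n) (hk1 : 1 ≤ k) (hk2 : k ≤ n - 2) :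
    IsPermOn n (sigA k) := by
  have hmt : Set.MapsTo (sigA k) (Set.Icc 1 n) (Set.Icc 1 n) := by
    intro i hi
    simp only [Set.mem_Icc] at hi ⊢
    unfold sigA
    split_ifs <;> omega
  have hinv : Set.InvOn (sigA k) (sigA k) (Set.Icc 1 n) (Set.Icc 1 n) := by
    constructor <;>
    · intro i hi
      simp only [Set.mem_Icc] at hi
      unfold sigA
      split_ifs <;> omega
  exact hinv.bijOn hmt hmt

lemma rhoA_perm (n k : ℕ) (hn : 3 ≤ n) (hk1 : 1 ≤ k) (hk2 : k ≤ n - 2) :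
    IsPermOn n (rhoA n k) := by
  have hmt : Set.MapsTo (rhoA n k) (Set.Icc 1 n) (Set.Icc 1 n) := by
    intro i hi
    simp only [Set.mem_Icc] at hi ⊢
    unfold rhoA
    split_ifs <;> omega
  have hmt' : Set.MapsTo (rhoInv n k) (Set.Icc 1 n) (Set.Icc 1 n) := by
    intro i hi
    simp only [Set.mem_Icc] at hi ⊢
    unfold rhoInv
    split_ifs <;> omega
  have hinv : Set.InvOn (rhoInv n k) (rhoA n k) (Set.Icc 1 n) (Set.Icc 1 n) := by
    constructor
    · intro i hi
      simp only [Set.mem_Icc] at hi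
      simp only [Function.comp, rhoA, rhoInv]
      split_ifs <;> omega
    · intro i hi
      simp only [Set.mem_Icc] at hi
      simp only [Function.comp, rhoA, rhoInv]
      split_ifs <;> omega
  exact hinv.bijOn hmt hmt'

lemma sigA_desc (n k : ℕ) (hn : 3 ≤ n) (hk1 : 1 ≤ k) (hk2 : k ≤ n - 2) :
    DescentSet n (sigA k) = Finset.Icc 1 k := by
  ext i
  simp only [DescentSet, Finset.mem_filter, Finset.mem_Icc]
  simp only [sigA]
  split_ifs <;> omega

lemma rhoA_desc (n k : ℕ) (hn : 3 ≤ n) (hk1 : 1 ≤ k) (hk2 : k ≤ n - 2) :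
    DescentSet n (rhoA n k) = Finset.Icc 1 k := by
  ext i
  simp only [DescentSet, Finset.mem_filter, Finset.mem_Icc]
  simp only [rhoA]
  split_ifs <;> omega

lemma hamming_filter (n k : ℕ) (hn : 3 ≤ n) (hk1 : 1 ≤ k) (hk2 : k ≤ n - 2) :
    ((Finset.Icc 1 n).filter fun i => sigA k i ≠ rhoA n k i)
      = (Finset.Icc 1 n).erase (k + 1) := by
  ext i
  simp only [Finset.mem_filter, Finset.mem_erase, Finset.mem_Icc, ne_eq]
  simp only [sigA, rhoA]
  split_ifs <;> omega

/-- Any permutation with descent set `{1,…,k}` has a valley with value 1 at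
position `k+1`. -/
lemma valley (n k : ℕ) (hn : 3 ≤ n) (hk1 : 1 ≤ k) (hk2 : k ≤ n - 2)
    (σ : ℕ → ℕ) (hσ : σ ∈ DSn n (Finset.Icc 1 k)) : σ (k + 1) = 1 := by
  obtain ⟨hbij, hdesc⟩ := hσ
  have hA : ∀ i, 1 ≤ i → i ≤ k → σ (i + 1) < σ i := by
    intro i h1 h2
    have hi : i ∈ DescentSet n σ := by
      rw [hdesc]; simp only [Finset.mem_Icc]; omega
    simp only [DescentSet, Finset.mem_filter, Finset.mem_Icc] at hi
    exact hi.2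
  have hB : ∀ i, k + 1 ≤ i → i ≤ n - 1 → σ i < σ (i + 1) := by
    intro i h1 h2
    have hnot : i ∉ DescentSet n σ := by
      rw [hdesc]; simp only [Finset.mem_Icc]; omega
    have hle : ¬ σ (i + 1) < σ i := by
      intro h
      exact hnot (by simp only [DescentSet, Finset.mem_filter, Finset.mem_Icc]
                     exact ⟨⟨by omega, by omega⟩, h⟩)
    have hne : σ i ≠ σ (i + 1) := by
      intro h
      have := hbij.injOn (Set.mem_Icc.mpr ⟨by omega, by omega⟩)
        (Set.mem_Icc.mpr ⟨by omega, by omega⟩) h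
      omega
    omega
  have mono1 : ∀ d, 1 ≤ d → d ≤ k → σ (k + 1) < σ (k + 1 - d) := by
    intro d
    induction d with
    | zero => omega
    | succ m ih =>
      intro _ hm
      by_cases hm0 : m = 0
      · subst hm0
        have := hA k hk1 le_rfl
        simpa using this
      · have h1 := ih (by omega) (by omega)
        have h2 := hA (k - m) (by omega) (by omega)
        have e1 : k - m + 1 = k + 1 - m := by omega
        rw [e1] at h2
        have e2 : k - m = k + 1 - (m + 1) := by omega
        rw [e2] at h2
        omega
  have mono2 : ∀ d, 1 ≤ d → k + 1 + d ≤ n → σ (k + 1) < σ (k + 1 + d) := by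
    intro d
    induction d with
    | zero => omega
    | succ m ih =>
      intro _ hm
      by_cases hm0 : m = 0
      · subst hm0
        exact hB (k + 1) le_rfl (by omega)
      · have h1 := ih (by omega) (by omega)
        have h2 := hB (k + 1 + m) (by omega) (by omega)
        have e : k + 1 + m + 1 = k + 1 + (m + 1) := by omega
        rw [e] at h2
        omega
  have h1mem : (1 : ℕ) ∈ Set.Icc 1 n := Set.mem_Icc.mpr ⟨le_rfl, by omega⟩
  obtain ⟨j, hj, hσj⟩ := hbij.surjOn h1mem
  simp only [Set.mem_Icc] at hj
  have hk1mem : σ (k + 1) ∈ Set.Icc 1 n :=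
    hbij.mapsTo (Set.mem_Icc.mpr ⟨by omega, by omega⟩)
  simp only [Set.mem_Icc] at hk1mem
  rcases lt_trichotomy j (k + 1) with h | h | h
  · exfalso
    have := mono1 (k + 1 - j) (by omega) (by omega)
    have e : k + 1 - (k + 1 - j) = j := by omega
    rw [e] at this
    omega
  · rw [← h]; exact hσj
  · exfalso
    have := mono2 (j - (k + 1)) (by omega) (by omega)
    have e : k + 1 + (j - (k + 1)) = j := by omega
    rw [e] at this
    omega

/-- For `S = {1,…,k}` with `1 ≤ k ≤ n-2`, the maximum Hamming distance
over `D(S;n)` is `n-1`. -/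
theorem stmt3 (n k : ℕ) (hn : 3 ≤ n) (hk1 : 1 ≤ k) (hk2 : k ≤ n - 2) :
    IsGreatest {d : ℕ | ∃ σ ∈ DSn n (Finset.Icc 1 k), ∃ ρ ∈ DSn n (Finset.Icc 1 k),
      DistinctOn n σ ρ ∧ d = dHamming n σ ρ} (n - 1) := by
  constructor
  · refine ⟨sigA k, ⟨sigA_perm n k hn hk1 hk2, sigA_desc n k hn hk1 hk2⟩,
      rhoA n k, ⟨rhoA_perm n k hn hk1 hk2, rhoA_desc n k hn hk1 hk2⟩, ?_, ?_⟩
    · refine ⟨1, Set.mem_Icc.mpr ⟨le_rfl, by omega⟩, ?_⟩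
      simp only [sigA, rhoA]
      split_ifs <;> omega
    · rw [dHamming, hamming_filter n k hn hk1 hk2,
        Finset.card_erase_of_mem (Finset.mem_Icc.mpr ⟨by omega, by omega⟩),
        Nat.card_Icc]
      omega
  · rintro d ⟨σ, hσ, ρ, hρ, -, rfl⟩
    have h1 : σ (k + 1) = 1 := valley n k hn hk1 hk2 σ hσ
    have h2 : ρ (k + 1) = 1 := valley n k hn hk1 hk2 ρ hρ
    have hsub : ((Finset.Icc 1 n).filter fun i => σ i ≠ ρ i)
        ⊆ (Finset.Icc 1 n).erase (k + 1) := by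
      intro i hi
      simp only [Finset.mem_filter] at hi
      refine Finset.mem_erase.mpr ⟨?_, hi.1⟩
      rintro rfl
      exact hi.2 (h1.trans h2.symm)
    calc dHamming n σ ρ ≤ ((Finset.Icc 1 n).erase (k + 1)).card :=
          Finset.card_le_card hsub
      _ = n - 1 := by
          rw [Finset.card_erase_of_mem (Finset.mem_Icc.mpr ⟨by omega, by omega⟩),
            Nat.card_Icc]
          omega
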